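/- Let G be a finitely generated group with finite generating set S, and let μ be a probability measure on G. If ∑_{g∈G} d_S(1,g)·μ(g) < ∞, where d_S is the word metric, then μ has finite entropy, i.e. ∑_{g∈G} −log₂(μ(g))·μ(g) < ∞. -/

import Mathlib

/-- The word norm `d_S(1,g)`: the least `n` such that `g` is a product of `n`
elements of `S ∪ S⁻¹`. -/
noncomputable def wordNorm {G : Type*} [Group G] (S : Set G) (g : G) : ℕ :=
  sInf {n : ℕ | ∃ L : List G, L.length = n ∧ (∀ x ∈ L, x ∈ S ∨ x⁻¹ ∈ S) ∧ L.prod = g}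

/-- `-log x · x ≤ 2√x` for `x ≥ 0`. -/
lemma neg_log_mul_self_le (x : ℝ) (hx : 0 ≤ x) : -Real.log x * x ≤ 2 * Real.sqrt x := by
  rcases eq_or_lt_of_le hx with h | h
  · simp [← h]
  · have hs : 0 < Real.sqrt x := Real.sqrt_pos.mpr h
    have hlog : Real.log x = 2 * Real.log (Real.sqrt x) := by
      conv_lhs => rw [← Real.sq_sqrt hx]
      rw [Real.log_pow]
      push_cast; ring
    have h2 : Real.log (Real.sqrt x)⁻¹ ≤ (Real.sqrt x)⁻¹ - 1 :=
      Real.log_le_sub_one_of_pos (by positivity)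
    have h3 : -Real.log x * x = 2 * Real.log (Real.sqrt x)⁻¹ * x := by
      rw [hlog, Real.log_inv]; ring
    rw [h3]
    calc 2 * Real.log (Real.sqrt x)⁻¹ * x ≤ 2 * (Real.sqrt x)⁻¹ * x := by
          apply mul_le_mul_of_nonneg_right _ hx
          linarith
      _ = 2 * (x / Real.sqrt x) := by ring
      _ = 2 * Real.sqrt x := by rw [Real.div_sqrt]

/-- If `G` is a group with a finite generating set `S` and `μ` is a probability measure
on `G` with finite first moment `∑ d_S(1,g)·μ(g) < ∞`, then `μ` has finite entropy:
`∑ −log₂(μ(g))·μ(g) < ∞`. -/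
theorem finite_entropy_of_finite_first_moment {G : Type*} [Group G]
    (S : Set G) (hS : S.Finite) (hgen : Subgroup.closure S = ⊤)
    (μ : G → ℝ) (hμ0 : ∀ g, 0 ≤ μ g) (hμ1 : HasSum μ 1)
    (hmom : Summable (fun g => (wordNorm S g : ℝ) * μ g)) :
    Summable (fun g => -Real.logb 2 (μ g) * μ g) := by
  classical
  have hT : (S ∪ S⁻¹ : Set G).Finite := hS.union hS.inv
  set k : ℕ := hT.toFinset.card with hk
  set c : ℝ := (k : ℝ) + 1 with hc
  have hc1 : (1 : ℝ) ≤ c := by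
    have : (0:ℝ) ≤ (k:ℝ) := Nat.cast_nonneg k
    rw [hc]; linarith
  have hc0 : (0 : ℝ) < c := lt_of_lt_of_le one_pos hc1
  set r : ℝ := c⁻¹ with hr
  have hr0 : 0 < r := by rw [hr]; positivity
  -- every g has a minimal word
  have word : ∀ g : G, ∃ L : List G, L.length = wordNorm S g ∧
      (∀ x ∈ L, x ∈ S ∨ x⁻¹ ∈ S) ∧ L.prod = g := by
    intro g
    have hg : g ∈ Subgroup.closure S := by rw [hgen]; trivial
    have hg' : g ∈ Submonoid.closure (S ∪ S⁻¹) := by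
      rw [← Subgroup.closure_toSubmonoid]; exact hg
    obtain ⟨l, hl1, hl2⟩ := Submonoid.exists_list_of_mem_closure hg'
    have hne : {n : ℕ | ∃ L : List G, L.length = n ∧
        (∀ x ∈ L, x ∈ S ∨ x⁻¹ ∈ S) ∧ L.prod = g}.Nonempty := by
      refine ⟨l.length, l, rfl, fun x hx => ?_, hl2⟩
      rcases hl1 x hx with h | h
      · exact Or.inl h
      · exact Or.inr (Set.mem_inv.mp h)
    have hmemInf := Nat.sInf_mem hne
    exact hmemInf
  choose L hlen hmemL hprodL using word
  -- counting: the sphere of radius n has at most k^n elements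
  have card_bound : ∀ (n : ℕ) (u : Finset G),
      (u.filter fun g => wordNorm S g = n).card ≤ k ^ n := by
    intro n u
    have hle : (u.filter fun g => wordNorm S g = n).card ≤
        (Fintype.piFinset fun _ : Fin n => hT.toFinset).card := by
      refine Finset.card_le_card_of_injOn (fun g i => (L g).getD i 1) ?_ ?_
      · intro g hg
        rw [Finset.mem_coe, Fintype.mem_piFinset]
        intro i
        have hg' := Finset.mem_filter.mp hg
        have hlg : (L g).length = n := by rw [hlen g, hg'.2]
        have hi : (i : ℕ) < (L g).length := by rw [hlg]; exact i.isLt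
        show (L g).getD i 1 ∈ hT.toFinset
        rw [List.getD_eq_getElem _ _ hi, Set.Finite.mem_toFinset]
        rcases hmemL g _ (List.getElem_mem hi) with h | h
        · exact Set.mem_union_left _ h
        · exact Set.mem_union_right _ (Set.mem_inv.mpr h)
      · intro g hg g' hg' hfeq
        have hg2 := (Finset.mem_filter.mp hg).2
        have hg2' := (Finset.mem_filter.mp hg').2
        have hlg : (L g).length = n := by rw [hlen g, hg2]
        have hlg' : (L g').length = n := by rw [hlen g', hg2']
        have hLeq : L g = L g' := by
          apply List.ext_getElem (by rw [hlg, hlg'])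
          intro i h1 h2
          have h3 : (L g).getD i 1 = (L g').getD i 1 := congrFun hfeq ⟨i, by rw [← hlg]; exact h1⟩
          rwa [List.getD_eq_getElem _ _ h1, List.getD_eq_getElem _ _ h2] at h3
        rw [← hprodL g, ← hprodL g', hLeq]
    calc (u.filter fun g => wordNorm S g = n).card
        ≤ (Fintype.piFinset fun _ : Fin n => hT.toFinset).card := hle
      _ = k ^ n := by rw [Fintype.card_piFinset_const]
  -- geometric summability
  have hkr1 : (k : ℝ) * r < 1 := by
    rw [hr, mul_inv_lt_iff₀ hc0, one_mul, hc]
    linarith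
  have hgeo : Summable (fun n : ℕ => ((k : ℝ) * r) ^ n) :=
    summable_geometric_of_lt_one (by positivity) hkr1
  have hrd : Summable (fun g : G => r ^ wordNorm S g) := by
    apply summable_of_sum_le (c := ∑' n : ℕ, ((k : ℝ) * r) ^ n)
    · intro g; positivity
    · intro u
      rw [← Finset.sum_fiberwise_of_maps_to
        (g := fun g => wordNorm S g) (t := u.image fun g => wordNorm S g)
        (fun g hg => Finset.mem_image_of_mem _ hg) (fun g => r ^ wordNorm S g)]
      have hstep : ∀ n ∈ u.image fun g => wordNorm S g,
          (∑ g ∈ u.filter fun g => wordNorm S g = n, r ^ wordNorm S g)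
            ≤ ((k : ℝ) * r) ^ n := by
        intro n _
        have heq : (∑ g ∈ u.filter fun g => wordNorm S g = n, r ^ wordNorm S g)
            = (u.filter fun g => wordNorm S g = n).card • r ^ n := by
          rw [← Finset.sum_const]
          apply Finset.sum_congr rfl
          intro g hg
          rw [(Finset.mem_filter.mp hg).2]
        rw [heq, nsmul_eq_mul]
        calc ((u.filter fun g => wordNorm S g = n).card : ℝ) * r ^ n
            ≤ ((k ^ n : ℕ) : ℝ) * r ^ n := by
              apply mul_le_mul_of_nonneg_right _ (by positivity)
              exact_mod_cast card_bound n u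
          _ = ((k : ℝ) * r) ^ n := by push_cast; rw [mul_pow]
      calc (∑ n ∈ u.image fun g => wordNorm S g,
              ∑ g ∈ u.filter fun g => wordNorm S g = n, r ^ wordNorm S g)
          ≤ ∑ n ∈ u.image fun g => wordNorm S g, ((k : ℝ) * r) ^ n :=
            Finset.sum_le_sum hstep
        _ ≤ ∑' n : ℕ, ((k : ℝ) * r) ^ n :=
            Summable.sum_le_tsum _ (fun i _ => by positivity) hgeo
  -- each μ g ≤ 1
  have hμle1 : ∀ g, μ g ≤ 1 := fun g => le_hasSum hμ1 g fun g' _ => hμ0 g'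
  have hlog2 : 0 < Real.log 2 := Real.log_pos one_lt_two
  have hlogc : 0 ≤ Real.logb 2 c := Real.logb_nonneg one_lt_two hc1
  -- pointwise bound
  have key : ∀ g, -Real.logb 2 (μ g) * μ g ≤
      (2 * Real.logb 2 c) * ((wordNorm S g : ℝ) * μ g)
        + (2 / Real.log 2) * r ^ wordNorm S g := by
    intro g
    set d := wordNorm S g with hd
    set x := μ g with hxdef
    have hx0 := hμ0 g
    have hx1 := hμle1 g
    by_cases hcase : x ≤ r ^ (2 * d)
    · have hsq : Real.sqrt x ≤ r ^ d := by
        have hs : Real.sqrt (r ^ (2 * d)) = r ^ d := by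
          rw [mul_comm 2 d, pow_mul]
          exact Real.sqrt_sq (by positivity)
        rw [← hs]
        exact Real.sqrt_le_sqrt hcase
      have h2 := neg_log_mul_self_le x hx0
      have h1 : -Real.logb 2 x * x ≤ 2 / Real.log 2 * r ^ d := by
        calc -Real.logb 2 x * x = (-Real.log x * x) / Real.log 2 := by
              rw [Real.logb]; ring
          _ ≤ (2 * Real.sqrt x) / Real.log 2 := by gcongr
          _ ≤ (2 * r ^ d) / Real.log 2 := by gcongr
          _ = 2 / Real.log 2 * r ^ d := by ring
      have h2' : 0 ≤ (2 * Real.logb 2 c) * ((d : ℝ) * x) := by positivity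
      linarith
    · push_neg at hcase
      have hx0' : 0 < x := lt_of_le_of_lt (by positivity) hcase
      have hlogle : -Real.logb 2 x ≤ 2 * (d : ℝ) * Real.logb 2 c := by
        have h1 : Real.logb 2 (r ^ (2 * d)) ≤ Real.logb 2 x :=
          Real.logb_le_logb_of_le one_lt_two (by positivity) hcase.le
        have h2 : Real.logb 2 (r ^ (2 * d)) = -(2 * (d : ℝ) * Real.logb 2 c) := by
          rw [Real.logb_pow, hr, Real.logb_inv]
          push_cast; ring
        linarith
      calc -Real.logb 2 x * x ≤ (2 * (d : ℝ) * Real.logb 2 c) * x :=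
            mul_le_mul_of_nonneg_right hlogle hx0
        _ = (2 * Real.logb 2 c) * ((d : ℝ) * x) := by ring
        _ ≤ (2 * Real.logb 2 c) * ((d : ℝ) * x) + (2 / Real.log 2) * r ^ d :=
            le_add_of_nonneg_right (by positivity)
  apply Summable.of_nonneg_of_le _ key
  · exact (hmom.mul_left _).add (hrd.mul_left _)
  · intro g
    exact mul_nonneg
      (neg_nonneg.mpr (Real.logb_nonpos one_lt_two (hμ0 g) (hμle1 g))) (hμ0 g)
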